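/- Let $F$ be a field, let $u_1,\dots,u_r$ be distinct nonzero elements of $F$ with $u_i u_j \neq 1$ and $u_i^2 \neq 1$ for all $i,j$, and let $\rho, q \in F$ be nonzero with $q^2 \neq 1$. Then the unique solution of the linear system $\sum_{j=1}^r \gamma_j/(1 - u_i u_j) = 1/(1-u_i^2) + 1/(\rho(q^{-1}-q))$ for $1 \le i \le r$ is given by $\gamma_j = \prod_{\ell \neq j} \frac{u_\ell u_j - 1}{u_j - u_\ell} \left( \frac{1-u_j^2}{\rho(q^{-1}-q)} \prod_{\ell \neq j} u_\ell + c_j \right)$, where $c_j = 1$ if $r$ is odd and $c_j = -u_j$ if $r$ is even. -/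

import Mathlib

open Finset

section
open Polynomial

private lemma aux1 {F : Type*} [CommRing F] {ι : Type*} [DecidableEq ι] (s : Finset ι)
    (u : ι → F) :
    (X ^ 2 - 1 : F[X]) ∣ (∏ ℓ ∈ s, (1 - X * C (u ℓ))) - X ^ s.card * ∏ ℓ ∈ s, (X - C (u ℓ)) := by
  induction s using Finset.induction_on with
  | empty => simp
  | @insert a s ha ih =>
    rw [prod_insert ha, prod_insert ha, card_insert_of_notMem ha]
    obtain ⟨t, ht⟩ := ih
    exact ⟨(1 - X * C (u a)) * t - X ^ s.card * ∏ ℓ ∈ s, (X - C (u ℓ)),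
      by linear_combination (1 - X * C (u a)) * ht⟩

private lemma key {F : Type*} [Field F] {r : ℕ} (u : Fin r → F)
    (hinj : Function.Injective u) (h0 : ∀ i, u i ≠ 0)
    (h1 : ∀ i j, u i * u j ≠ 1) (hsq : ∀ i, u i ^ 2 ≠ 1) (Cc : F) (i : Fin r) :
    ∑ j, ((∏ ℓ ∈ univ.erase j, ((u ℓ * u j - 1) / (u j - u ℓ))) *
        ((1 - u j ^ 2) * Cc * ∏ ℓ ∈ univ.erase j, u ℓ +
          (if Odd r then 1 else -u j))) / (1 - u i * u j)
      = 1 / (1 - u i ^ 2) + Cc := by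
  classical
  have hr : 0 < r := i.pos
  set g : Fin r → F := fun j => (∏ ℓ ∈ univ.erase j, ((u ℓ * u j - 1) / (u j - u ℓ))) *
        ((1 - u j ^ 2) * Cc * ∏ ℓ ∈ univ.erase j, u ℓ +
          (if Odd r then 1 else -u j)) with hg
  set P : F := ∏ ℓ, u ℓ with hP
  set pu : F[X] := ∏ ℓ, (1 - X * C (u ℓ)) with hpu
  set pv : F[X] := ∏ ℓ, (X - C (u ℓ)) with hpv
  set pvi : F[X] := ∏ ℓ, (X - C (u ℓ)⁻¹) with hpvi
  set B : F[X] := (∑ k, C (g k) * ∏ ℓ ∈ univ.erase k, (1 - X * C (u ℓ)))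
      + C ((-1) ^ r * Cc * P) * (pv - pvi) with hB
  set D : F[X] := (1 - X ^ 2) * B - pu + X ^ (r % 2) * pv with hD
  -- evaluation formula
  have hDeval : ∀ t : F, D.eval t =
      (1 - t ^ 2) * ((∑ k, g k * ∏ ℓ ∈ univ.erase k, (1 - u ℓ * t))
        + ((-1) ^ r * Cc * P) * ((∏ ℓ, (t - u ℓ)) - ∏ ℓ, (t - (u ℓ)⁻¹)))
      - (∏ ℓ, (1 - u ℓ * t)) + t ^ (r % 2) * ∏ ℓ, (t - u ℓ) := by
    intro t
    simp [hD, hB, hpu, hpv, hpvi, eval_prod, eval_finset_sum]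
  -- factorization of pu
  have hfac : pu = C ((-1) ^ r * P) * pvi := by
    have h : ∀ ℓ : Fin r, (1 - X * C (u ℓ)) = -C (u ℓ) * (X - C (u ℓ)⁻¹) := by
      intro ℓ
      have h2 : C (u ℓ) * C (u ℓ)⁻¹ = 1 := by
        rw [← C_mul, mul_inv_cancel₀ (h0 ℓ), C_1]
      linear_combination -h2
    rw [hpu, hpvi, Finset.prod_congr rfl fun ℓ _ => h ℓ, Finset.prod_mul_distrib]
    congr 1
    calc (∏ x : Fin r, -C (u x)) = ∏ x : Fin r, ((-1) * C (u x)) := by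
          refine Finset.prod_congr rfl fun x _ => by ring
      _ = (-1) ^ r * ∏ x : Fin r, C (u x) := by
          rw [Finset.prod_mul_distrib, Finset.prod_const, Finset.card_univ, Fintype.card_fin]
      _ = C ((-1) ^ r * P) := by
          rw [hP, map_mul, map_pow, map_neg, map_one, map_prod]
  have hf1 : ∀ a : F, (1 - X * C a : F[X]).natDegree ≤ 1 :=
    fun a => le_trans (natDegree_sub_le _ _)
      (max_le (by simp) ((natDegree_mul_le).trans (by simp)))
  have hmon_v : pv.Monic := monic_prod_of_monic _ _ fun ℓ _ => monic_X_sub_C _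
  have hmon_vi : pvi.Monic := monic_prod_of_monic _ _ fun ℓ _ => monic_X_sub_C _
  have hnat_v : pv.natDegree = r := by
    rw [hpv, natDegree_prod _ _ fun ℓ _ => X_sub_C_ne_zero _]
    simp
  have hnat_vi : pvi.natDegree = r := by
    rw [hpvi, natDegree_prod _ _ fun ℓ _ => X_sub_C_ne_zero _]
    simp
  -- degree bounds
  have hdegB : B.natDegree ≤ r - 1 := by
    refine le_trans (natDegree_add_le _ _) (max_le ?_ ?_)
    · refine natDegree_sum_le_of_forall_le _ _ fun k _ => ?_
      refine le_trans natDegree_mul_le ?_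
      simp only [natDegree_C, zero_add]
      refine le_trans (natDegree_prod_le _ _) ?_
      refine le_trans (Finset.sum_le_sum fun ℓ _ => hf1 (u ℓ)) ?_
      simp [Finset.card_erase_of_mem]
    · refine le_trans natDegree_mul_le ?_
      simp only [natDegree_C, zero_add]
      by_cases hz : pv - pvi = 0
      · simp [hz]
      · have hdeg : (pv - pvi).degree < pv.degree := by
          refine degree_sub_lt ?_ hmon_v.ne_zero ?_
          · rw [degree_eq_natDegree hmon_v.ne_zero, degree_eq_natDegree hmon_vi.ne_zero,
              hnat_v, hnat_vi]
          · rw [hmon_v.leadingCoeff, hmon_vi.leadingCoeff]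
        have := natDegree_lt_natDegree hz hdeg
        omega
  have hdegD : D.natDegree ≤ r + 1 := by
    have b1 : ((1 - X ^ 2) * B).natDegree ≤ r + 1 := by
      refine le_trans natDegree_mul_le ?_
      have : (1 - X ^ 2 : F[X]).natDegree ≤ 2 :=
        le_trans (natDegree_sub_le _ _) (by simp)
      omega
    have b2 : pu.natDegree ≤ r := by
      refine le_trans (natDegree_prod_le _ _) ?_
      refine le_trans (Finset.sum_le_sum fun ℓ _ => hf1 (u ℓ)) ?_
      simp
    have b3 : (X ^ (r % 2) * pv).natDegree ≤ r + 1 := by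
      refine le_trans natDegree_mul_le ?_
      rw [natDegree_X_pow, hnat_v]
      omega
    refine le_trans (natDegree_add_le _ _) (max_le (le_trans (natDegree_sub_le _ _) ?_) b3)
    exact max_le b1 (by omega)
  -- divisibility
  have hdvd : (X ^ 2 - 1 : F[X]) ∣ D := by
    have ha := aux1 (univ : Finset (Fin r)) u
    rw [card_univ, Fintype.card_fin] at ha
    have hb : (X ^ 2 - 1 : F[X]) ∣ (X ^ r - X ^ (r % 2)) * pv := by
      apply Dvd.dvd.mul_right
      have hx : (X ^ r - X ^ (r % 2) : F[X]) = X ^ (r % 2) * ((X ^ 2) ^ (r / 2) - 1) := by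
        rw [mul_sub, mul_one, ← pow_mul, ← pow_add]
        congr 2
        omega
      rw [hx]
      exact Dvd.dvd.mul_left (by simpa using sub_dvd_pow_sub_pow (X ^ 2 : F[X]) 1 (r / 2)) _
    have h2 : (X ^ 2 - 1 : F[X]) ∣ pu - X ^ (r % 2) * pv := by
      have h3 := dvd_add ha hb
      convert h3 using 1
      rw [hpu, hpv]
      ring
    have h4 : D = (X ^ 2 - 1) * (-B) - (pu - X ^ (r % 2) * pv) := by rw [hD]; ring
    rw [h4]
    exact dvd_sub (Dvd.intro _ rfl) h2
  -- evaluation at inverse points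
  have hEvalInv : ∀ j, D.eval (u j)⁻¹ = 0 := by
    intro j
    have hz : u j * (u j)⁻¹ = 1 := mul_inv_cancel₀ (h0 j)
    rw [hDeval]
    have e1 : (∏ ℓ, (1 - u ℓ * (u j)⁻¹)) = 0 :=
      Finset.prod_eq_zero (mem_univ j) (by rw [mul_inv_cancel₀ (h0 j), sub_self])
    have e2 : (∏ ℓ, ((u j)⁻¹ - (u ℓ)⁻¹)) = 0 :=
      Finset.prod_eq_zero (mem_univ j) (sub_self _)
    have e3 : (∑ k, g k * ∏ ℓ ∈ univ.erase k, (1 - u ℓ * (u j)⁻¹))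
        = g j * ∏ ℓ ∈ univ.erase j, (1 - u ℓ * (u j)⁻¹) := by
      refine Finset.sum_eq_single j (fun k _ hk => ?_) (by simp)
      rw [Finset.prod_eq_zero (Finset.mem_erase.2 ⟨fun h => hk h.symm, mem_univ j⟩)
        (by rw [mul_inv_cancel₀ (h0 j), sub_self]), mul_zero]
    rw [e1, e2, e3, sub_zero]
    have e4 : (∏ ℓ ∈ univ.erase j, (1 - u ℓ * (u j)⁻¹))
        = (∏ ℓ ∈ univ.erase j, (u j - u ℓ)) * ((u j)⁻¹) ^ (r - 1) := by
      calc (∏ ℓ ∈ univ.erase j, (1 - u ℓ * (u j)⁻¹))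
          = ∏ ℓ ∈ univ.erase j, ((u j - u ℓ) * (u j)⁻¹) :=
            Finset.prod_congr rfl fun ℓ _ => by linear_combination -hz
        _ = _ := by
            rw [Finset.prod_mul_distrib, Finset.prod_const,
              card_erase_of_mem (mem_univ j), card_univ, Fintype.card_fin]
    have e5 : (∏ ℓ, ((u j)⁻¹ - u ℓ)) = ((u j)⁻¹ - u j) *
        ((∏ ℓ ∈ univ.erase j, (1 - u ℓ * u j)) * ((u j)⁻¹) ^ (r - 1)) := by
      rw [← Finset.mul_prod_erase univ _ (mem_univ j)]
      congr 1
      calc (∏ ℓ ∈ univ.erase j, ((u j)⁻¹ - u ℓ))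
          = ∏ ℓ ∈ univ.erase j, ((1 - u ℓ * u j) * (u j)⁻¹) :=
            Finset.prod_congr rfl fun ℓ _ => by linear_combination (u ℓ) * hz
        _ = _ := by
            rw [Finset.prod_mul_distrib, Finset.prod_const,
              card_erase_of_mem (mem_univ j), card_univ, Fintype.card_fin]
    have e7 : P = u j * ∏ ℓ ∈ univ.erase j, u ℓ := by
      rw [hP, ← Finset.mul_prod_erase univ u (mem_univ j)]
    have hdel : (∏ ℓ ∈ univ.erase j, (u j - u ℓ)) ≠ 0 :=
      Finset.prod_ne_zero_iff.2 fun ℓ hℓ =>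
        sub_ne_zero.2 fun h => (Finset.mem_erase.1 hℓ).1 (hinj h.symm)
    have e6 : (∏ ℓ ∈ univ.erase j, (u ℓ * u j - 1))
        = (-1) ^ (r - 1) * ∏ ℓ ∈ univ.erase j, (1 - u ℓ * u j) := by
      calc (∏ ℓ ∈ univ.erase j, (u ℓ * u j - 1))
          = ∏ ℓ ∈ univ.erase j, ((-1) * (1 - u ℓ * u j)) :=
            Finset.prod_congr rfl fun ℓ _ => by ring
        _ = _ := by
            rw [Finset.prod_mul_distrib, Finset.prod_const,
              card_erase_of_mem (mem_univ j), card_univ, Fintype.card_fin]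
    have e8 : (∏ ℓ ∈ univ.erase j, ((u ℓ * u j - 1) / (u j - u ℓ))) *
        (∏ ℓ ∈ univ.erase j, (u j - u ℓ))
        = (-1) ^ (r - 1) * ∏ ℓ ∈ univ.erase j, (1 - u ℓ * u j) := by
      rw [Finset.prod_div_distrib, div_mul_cancel₀ _ hdel, e6]
    simp only [hg]
    rw [e4, e5, e7]
    rcases Nat.even_or_odd r with hpar | hpar
    · have h1p : ((-1 : F)) ^ r = 1 := Even.neg_one_pow hpar
      have h2p : ((-1 : F)) ^ (r - 1) = -1 := Odd.neg_one_pow (Nat.Even.sub_odd hr hpar odd_one)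
      have h4p : ¬ Odd r := Nat.not_odd_iff_even.2 hpar
      have h3p : r % 2 = 0 := Nat.even_iff.1 hpar
      rw [h2p] at e8
      rw [if_neg h4p, h1p, h3p, pow_zero]
      linear_combination ((1 - ((u j)⁻¹)^2) * ((1 - (u j)^2)*Cc*(∏ ℓ ∈ univ.erase j, u ℓ) + -(u j)) * ((u j)⁻¹)^(r-1)) * e8
        + ((∏ ℓ ∈ univ.erase j, (1 - u ℓ * u j)) * ((u j)⁻¹)^(r-1) * ((1 - ((u j)⁻¹)^2)*Cc*(∏ ℓ ∈ univ.erase j, u ℓ) - (u j)⁻¹)) * hz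
    · have h1p : ((-1 : F)) ^ r = -1 := Odd.neg_one_pow hpar
      have h2p : ((-1 : F)) ^ (r - 1) = 1 := Even.neg_one_pow (Nat.Odd.sub_odd hpar odd_one)
      have h3p : r % 2 = 1 := Nat.odd_iff.1 hpar
      rw [h2p, one_mul] at e8
      rw [if_pos hpar, h1p, h3p, pow_one]
      linear_combination ((1 - ((u j)⁻¹)^2) * ((1 - (u j)^2)*Cc*(∏ ℓ ∈ univ.erase j, u ℓ) + 1) * ((u j)⁻¹)^(r-1)) * e8
        + (-(∏ ℓ ∈ univ.erase j, (1 - u ℓ * u j)) * ((u j)⁻¹)^(r-1) * ((1 - ((u j)⁻¹)^2)*Cc*(∏ ℓ ∈ univ.erase j, u ℓ) + 1)) * hz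
  -- D = 0
  have hD0 : D = 0 := by
    obtain ⟨E, hE⟩ := hdvd
    suffices hE0 : E = 0 by rw [hE, hE0, mul_zero]
    by_contra hE0
    have hX2ne : (X ^ 2 - 1 : F[X]) ≠ 0 := by
      have := X_pow_sub_C_ne_zero (R := F) (n := 2) (by norm_num) 1
      simpa using this
    have hX2deg : (X ^ 2 - 1 : F[X]).natDegree = 2 := by
      have := natDegree_X_pow_sub_C (R := F) (n := 2) (r := (1:F))
      simpa using this
    have hDdeg : D.natDegree = 2 + E.natDegree := by
      rw [hE, natDegree_mul hX2ne hE0, hX2deg]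
    have hcard : E.natDegree < Fintype.card (Fin r) := by
      rw [Fintype.card_fin]
      omega
    have hinjv : Function.Injective (fun j : Fin r => (u j)⁻¹) := by
      intro a b hab
      exact hinj (inv_injective hab)
    have hEv : ∀ j : Fin r, E.eval ((u j)⁻¹) = 0 := by
      intro j
      have h5 := hEvalInv j
      rw [hE, eval_mul] at h5
      have h6 : (((u j)⁻¹ : F) ^ 2 - 1) ≠ 0 := by
        intro hc
        apply hsq j
        have h8 : ((u j) ^ 2)⁻¹ = 1 := by rw [← inv_pow]; linear_combination hc
        exact (inv_eq_one.mp h8)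
      have h7 : eval (u j)⁻¹ (X ^ 2 - 1 : F[X]) = ((u j)⁻¹ : F) ^ 2 - 1 := by simp
      rw [h7] at h5
      exact (mul_eq_zero.mp h5).resolve_left h6
    exact hE0 (Polynomial.eq_zero_of_natDegree_lt_card_of_eval_eq_zero E hinjv hEv hcard)
  -- conclude
  have hti := hDeval (u i)
  rw [hD0, eval_zero] at hti
  have hpv0 : (∏ ℓ, (u i - u ℓ)) = 0 := Finset.prod_eq_zero (mem_univ i) (sub_self _)
  rw [hpv0] at hti
  have hWV := congrArg (eval (u i)) hfac
  rw [eval_mul, eval_C, hpu, hpvi, eval_prod, eval_prod] at hWV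
  simp only [eval_sub, eval_mul, eval_one, eval_X, eval_C] at hWV
  -- hWV : ∏ (1 - u i * u ℓ)?? check orders
  have hWcomm : (∏ ℓ, (1 - u ℓ * u i)) = ∏ ℓ, (1 - u i * u ℓ) :=
    Finset.prod_congr rfl fun ℓ _ => by ring
  have hWne : (∏ ℓ, (1 - u ℓ * u i)) ≠ 0 :=
    Finset.prod_ne_zero_iff.2 fun ℓ _ => sub_ne_zero.2 (Ne.symm (h1 ℓ i))
  have hne : ∀ ℓ, (1 : F) - u i * u ℓ ≠ 0 := fun ℓ => sub_ne_zero.2 (Ne.symm (h1 i ℓ))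
  have hsne : (1 : F) - u i ^ 2 ≠ 0 := sub_ne_zero.2 (Ne.symm (hsq i))
  have hterm : ∀ j : Fin r, g j / (1 - u i * u j)
      = g j * (∏ ℓ ∈ univ.erase j, (1 - u ℓ * u i)) / (∏ ℓ, (1 - u ℓ * u i)) := by
    intro j
    rw [eq_div_iff hWne, ← Finset.mul_prod_erase univ _ (mem_univ j),
      div_mul_eq_mul_div, div_eq_iff (hne j)]
    ring
  rw [Finset.sum_congr rfl fun j _ => hterm j, ← Finset.sum_div]
  have hgoal : (1 - u i ^ 2) * (∑ k, g k * ∏ ℓ ∈ univ.erase k, (1 - u ℓ * u i))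
      = (1 + Cc * (1 - u i ^ 2)) * ∏ ℓ, (1 - u ℓ * u i) := by
    linear_combination -hti - ((1 - u i ^ 2) * Cc) * hWV - ((1 - u i ^ 2) * Cc) * hWcomm
  have hS : (∑ k, g k * ∏ ℓ ∈ univ.erase k, (1 - u ℓ * u i))
      = ((1 + Cc * (1 - u i ^ 2)) * ∏ ℓ, (1 - u ℓ * u i)) / (1 - u i ^ 2) := by
    rw [← hgoal, mul_div_cancel_left₀ _ hsne]
  rw [hS]
  have hW2 : (∏ x, (1 - u i * u x)) ≠ 0 := by rw [← hWcomm]; exact hWne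
  field_simp [hW2, hWne]

end

/-- Over a field `F`, with `u₁, …, u_r` distinct nonzero, `uᵢ uⱼ ≠ 1`, `uᵢ² ≠ 1`,
and `ρ, q` nonzero with `q² ≠ 1`, the unique solution `γ` of the system
`∑ⱼ γⱼ/(1 − uᵢuⱼ) = 1/(1 − uᵢ²) + 1/(ρ(q⁻¹ − q))` is given by the explicit formula
`γⱼ = ∏_{ℓ≠j} (u_ℓ u_j − 1)/(u_j − u_ℓ) · ((1 − u_j²)/(ρ(q⁻¹−q)) ∏_{ℓ≠j} u_ℓ + c_j)`
where `c_j = 1` if `r` is odd and `c_j = −u_j` if `r` is even. -/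
theorem stmt4 {F : Type*} [Field F] {r : ℕ} (u : Fin r → F)
    (hinj : Function.Injective u) (h0 : ∀ i, u i ≠ 0)
    (h1 : ∀ i j, u i * u j ≠ 1) (hsq : ∀ i, u i ^ 2 ≠ 1)
    (ρ q : F) (hρ : ρ ≠ 0) (hq : q ≠ 0) (hq2 : q ^ 2 ≠ 1)
    (γ : Fin r → F) :
    (∀ i, ∑ j, γ j / (1 - u i * u j)
        = 1 / (1 - u i ^ 2) + 1 / (ρ * (q⁻¹ - q)))
    ↔ ∀ j, γ j = (∏ ℓ ∈ univ.erase j, ((u ℓ * u j - 1) / (u j - u ℓ))) *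
        ((1 - u j ^ 2) / (ρ * (q⁻¹ - q)) * ∏ ℓ ∈ univ.erase j, u ℓ +
          (if Odd r then 1 else -u j)) := by
  classical
  set Cc : F := (ρ * (q⁻¹ - q))⁻¹ with hCc
  set G : Fin r → F := fun j => (∏ ℓ ∈ univ.erase j, ((u ℓ * u j - 1) / (u j - u ℓ))) *
      ((1 - u j ^ 2) * Cc * ∏ ℓ ∈ univ.erase j, u ℓ + (if Odd r then 1 else -u j)) with hG
  have hform_eq : ∀ j : Fin r, (∏ ℓ ∈ univ.erase j, ((u ℓ * u j - 1) / (u j - u ℓ))) *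
        ((1 - u j ^ 2) / (ρ * (q⁻¹ - q)) * ∏ ℓ ∈ univ.erase j, u ℓ +
          (if Odd r then 1 else -u j)) = G j := by
    intro j
    rw [hG, div_eq_mul_inv]
  have hrhs : 1 / (ρ * (q⁻¹ - q)) = Cc := one_div _
  have hkey := key u hinj h0 h1 hsq Cc
  constructor
  · intro hsys j
    have hr : 0 < r := j.pos
    have hWne : ∀ i : Fin r, (∏ ℓ, (1 - u ℓ * u i)) ≠ 0 := fun i =>
      Finset.prod_ne_zero_iff.2 fun ℓ _ => sub_ne_zero.2 (Ne.symm (h1 ℓ i))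
    set N : Polynomial F := ∑ k, Polynomial.C (γ k - G k) *
        ∏ ℓ ∈ univ.erase k, (1 - Polynomial.X * Polynomial.C (u ℓ)) with hN
    have hNeval : ∀ t : F, N.eval t
        = ∑ k, (γ k - G k) * ∏ ℓ ∈ univ.erase k, (1 - u ℓ * t) := by
      intro t
      simp [hN, Polynomial.eval_prod, Polynomial.eval_finset_sum]
    have hN0 : N = 0 := by
      apply Polynomial.eq_zero_of_natDegree_lt_card_of_eval_eq_zero N hinj
      · intro i
        rw [hNeval]
        have hsum0 : ∑ k, (γ k - G k) / (1 - u i * u k) = 0 := by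
          have h1s := hsys i
          rw [hrhs] at h1s
          simp only [sub_div]
          rw [Finset.sum_sub_distrib, h1s, hkey i, sub_self]
        have hterm : ∀ k : Fin r, (γ k - G k) * ∏ ℓ ∈ univ.erase k, (1 - u ℓ * u i)
            = ((γ k - G k) / (1 - u i * u k)) * ∏ ℓ, (1 - u ℓ * u i) := by
          intro k
          have hnek : (1 : F) - u i * u k ≠ 0 := sub_ne_zero.2 (Ne.symm (h1 i k))
          rw [div_mul_eq_mul_div, eq_div_iff hnek,
            ← Finset.mul_prod_erase univ (fun ℓ => 1 - u ℓ * u i) (mem_univ k)]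
          ring
        rw [Finset.sum_congr rfl fun k _ => hterm k, ← Finset.sum_mul, hsum0, zero_mul]
      · rw [Fintype.card_fin]
        have hb : N.natDegree ≤ r - 1 := by
          refine Polynomial.natDegree_sum_le_of_forall_le _ _ fun k _ => ?_
          refine le_trans Polynomial.natDegree_mul_le ?_
          simp only [Polynomial.natDegree_C, zero_add]
          refine le_trans (Polynomial.natDegree_prod_le _ _) ?_
          have hf1 : ∀ a : F, ((1 : Polynomial F) - Polynomial.X * Polynomial.C a).natDegree ≤ 1 :=
            fun a => le_trans (Polynomial.natDegree_sub_le _ _)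
              (max_le (by simp) ((Polynomial.natDegree_mul_le).trans (by simp)))
          refine le_trans (Finset.sum_le_sum fun ℓ _ => hf1 (u ℓ)) ?_
          simp [Finset.card_erase_of_mem]
        omega
    have hNev : (0 : F) = ∑ k, (γ k - G k) * ∏ ℓ ∈ univ.erase k, (1 - u ℓ * (u j)⁻¹) := by
      rw [← hNeval, hN0, Polynomial.eval_zero]
    rw [Finset.sum_eq_single j (fun k _ hk => by
      rw [Finset.prod_eq_zero (Finset.mem_erase.2 ⟨fun h => hk h.symm, mem_univ j⟩)
        (by rw [mul_inv_cancel₀ (h0 j), sub_self]), mul_zero]) (by simp)] at hNev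
    have hprodne : (∏ ℓ ∈ univ.erase j, (1 - u ℓ * (u j)⁻¹)) ≠ 0 := by
      refine Finset.prod_ne_zero_iff.2 fun ℓ hℓ => ?_
      intro hc
      have h2 : u ℓ * (u j)⁻¹ = 1 := by linear_combination -hc
      exact (Finset.mem_erase.1 hℓ).1 (hinj ((mul_inv_eq_one₀ (h0 j)).1 h2))
    have hzero : γ j - G j = 0 := by
      rcases mul_eq_zero.1 hNev.symm with h | h
      · exact h
      · exact absurd h hprodne
    rw [hform_eq j]
    exact sub_eq_zero.1 hzero
  · intro hform i
    rw [hrhs]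
    calc ∑ j, γ j / (1 - u i * u j) = ∑ j, G j / (1 - u i * u j) :=
          Finset.sum_congr rfl fun j _ => by rw [hform j, hform_eq j]
      _ = 1 / (1 - u i ^ 2) + Cc := hkey i
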